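/- The classifier best-response map T_θ, defined by T_θ(p_φ)(y|x̃) = Σ_x ρ(x,y) p_φ(x̃|x,y) / Σ_{y'} Σ_x ρ(x,y') p_φ(x̃|x,y'), is Lipschitz in ℓ¹ norm: if ρ(x,y) ≤ 1/|X| for all (x,y) and the denominator satisfies Σ_{y,x} ρ(x,y) p_φ(x̃|x,y) ≥ α > 0 for all x̃, then ‖T_θ(p_φ) - T_θ(p_{φ'})‖₁ ≤ 2 α^{-1} |X|^{-1} ‖p_φ - p_{φ'}‖₁. -/

import Mathlib

open Finset

lemma aux_ratio (α : ℝ) (hα : 0 < α) (a b : Bool → ℝ)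
    (ha : ∀ y, 0 ≤ a y) (hb : ∀ y, 0 ≤ b y)
    (hA : α ≤ ∑ y : Bool, a y) (hB : α ≤ ∑ y : Bool, b y) :
    ∑ y : Bool, |a y / (∑ y' : Bool, a y') - b y / (∑ y' : Bool, b y')|
      ≤ 2 / α * ∑ y : Bool, |a y - b y| := by
  set A := ∑ y : Bool, a y with hAdef
  set B := ∑ y : Bool, b y with hBdef
  have hA0 : 0 < A := hα.trans_le hA
  have hB0 : 0 < B := hα.trans_le hB
  set D := ∑ y : Bool, |a y - b y| with hDdef
  have hD0 : 0 ≤ D := Finset.sum_nonneg fun y _ => abs_nonneg _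
  have hBA : |B - A| ≤ D := by
    have h1 : B - A = ∑ y : Bool, (b y - a y) := by
      rw [hAdef, hBdef, ← Finset.sum_sub_distrib]
    rw [h1]
    calc |∑ y : Bool, (b y - a y)| ≤ ∑ y : Bool, |b y - a y| :=
          Finset.abs_sum_le_sum_abs _ _
      _ = D := by simp [hDdef, abs_sub_comm]
  have step1 : ∑ y : Bool, |a y / A - b y / B|
      ≤ ∑ y : Bool, (|a y - b y| / A + b y * (|B - A| / (A * B))) := by
    apply Finset.sum_le_sum
    intro y _
    have key : a y / A - b y / B = (a y - b y) / A + b y * ((B - A) / (A * B)) := by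
      field_simp
      ring
    rw [key]
    calc |(a y - b y) / A + b y * ((B - A) / (A * B))|
        ≤ |(a y - b y) / A| + |b y * ((B - A) / (A * B))| := abs_add_le _ _
      _ = |a y - b y| / A + b y * (|B - A| / (A * B)) := by
          rw [abs_div, abs_mul, abs_div, abs_mul, abs_of_pos hA0, abs_of_pos hB0,
            abs_of_nonneg (hb y)]
  have step2 : ∑ y : Bool, (|a y - b y| / A + b y * (|B - A| / (A * B)))
      = D / A + |B - A| / A := by
    rw [Finset.sum_add_distrib, ← Finset.sum_div, ← Finset.sum_mul, ← hBdef, ← hDdef]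
    congr 1
    field_simp
  calc ∑ y : Bool, |a y / A - b y / B| ≤ D / A + |B - A| / A := by
        rw [← step2]; exact step1
    _ ≤ D / A + D / A := by
        gcongr
    _ = 2 * D / A := by ring
    _ ≤ 2 * D / α := by gcongr
    _ = 2 / α * D := by ring

theorem stmt_14 {X Xt : Type*} [Fintype X] [Fintype Xt]
    (α : ℝ) (hα : 0 < α)
    (ρ : X × Bool → ℝ) (hρ0 : ∀ c, 0 ≤ ρ c) (hρ1 : ∑ c : X × Bool, ρ c = 1)
    (hρu : ∀ c : X × Bool, ρ c ≤ (Fintype.card X : ℝ)⁻¹)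
    (φ φ' : X × Bool → Xt → ℝ)
    (hφ0 : ∀ c xt, 0 ≤ φ c xt) (hφ1 : ∀ c, ∑ xt : Xt, φ c xt = 1)
    (hφ'0 : ∀ c xt, 0 ≤ φ' c xt) (hφ'1 : ∀ c, ∑ xt : Xt, φ' c xt = 1)
    (hden : ∀ xt : Xt, α ≤ ∑ y : Bool, ∑ x : X, ρ (x, y) * φ (x, y) xt)
    (hden' : ∀ xt : Xt, α ≤ ∑ y : Bool, ∑ x : X, ρ (x, y) * φ' (x, y) xt) :
    ∑ xt : Xt, ∑ y : Bool,
        |(∑ x : X, ρ (x, y) * φ (x, y) xt)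
            / (∑ y' : Bool, ∑ x : X, ρ (x, y') * φ (x, y') xt)
          - (∑ x : X, ρ (x, y) * φ' (x, y) xt)
            / (∑ y' : Bool, ∑ x : X, ρ (x, y') * φ' (x, y') xt)|
      ≤ 2 * α⁻¹ * (Fintype.card X : ℝ)⁻¹ *
          ∑ c : X × Bool, ∑ xt : Xt, |φ c xt - φ' c xt| := by
  have hrhs : ∑ c : X × Bool, ∑ xt : Xt, |φ c xt - φ' c xt|
      = ∑ xt : Xt, ∑ c : X × Bool, |φ c xt - φ' c xt| := Finset.sum_comm
  rw [hrhs, Finset.mul_sum]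
  apply Finset.sum_le_sum
  intro xt _
  have key := aux_ratio α hα
      (fun y => ∑ x : X, ρ (x, y) * φ (x, y) xt)
      (fun y => ∑ x : X, ρ (x, y) * φ' (x, y) xt)
      (fun y => Finset.sum_nonneg fun x _ => mul_nonneg (hρ0 _) (hφ0 _ _))
      (fun y => Finset.sum_nonneg fun x _ => mul_nonneg (hρ0 _) (hφ'0 _ _))
      (hden xt) (hden' xt)
  refine key.trans ?_
  have hbound : ∑ y : Bool, |(∑ x : X, ρ (x, y) * φ (x, y) xt)
        - ∑ x : X, ρ (x, y) * φ' (x, y) xt|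
      ≤ (Fintype.card X : ℝ)⁻¹ * ∑ c : X × Bool, |φ c xt - φ' c xt| := by
    have hcsum : ∑ c : X × Bool, |φ c xt - φ' c xt|
        = ∑ y : Bool, ∑ x : X, |φ (x, y) xt - φ' (x, y) xt| := by
      rw [Fintype.sum_prod_type]
      exact Finset.sum_comm
    rw [hcsum, Finset.mul_sum]
    apply Finset.sum_le_sum
    intro y _
    rw [← Finset.sum_sub_distrib, Finset.mul_sum]
    refine (Finset.abs_sum_le_sum_abs _ _).trans (Finset.sum_le_sum fun x _ => ?_)
    rw [← mul_sub, abs_mul, abs_of_nonneg (hρ0 (x, y))]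
    exact mul_le_mul_of_nonneg_right (hρu (x, y)) (abs_nonneg _)
  calc 2 / α * ∑ y : Bool, |(∑ x : X, ρ (x, y) * φ (x, y) xt)
        - ∑ x : X, ρ (x, y) * φ' (x, y) xt|
      ≤ 2 / α * ((Fintype.card X : ℝ)⁻¹ * ∑ c : X × Bool, |φ c xt - φ' c xt|) := by
        apply mul_le_mul_of_nonneg_left hbound
        positivity
    _ = 2 * α⁻¹ * (Fintype.card X : ℝ)⁻¹ * ∑ c : X × Bool, |φ c xt - φ' c xt| := by
        ring
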